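/- Let n ≥ 2 and let f : [0,∞) → ℝ be continuous with f(0) = 0, twice continuously differentiable on (0,∞) with lim_{r→0⁺} f'(r) = 0, and satisfy f''(r) = (1 + f'(r)²)(1 - (n-1)f'(r)/r) for all r > 0. Then for every ε > 0 there exists a constant M = M(ε) > 0 such that f(r) > (1-ε)·r²/(2(n-1)) - M for all r ≥ 0. -/

import Mathlib

open Real Filter Set

lemma no_escape {ψ : ℝ → ℝ} {a b : ℝ} (hab : a ≤ b)
    (hc : ContinuousOn ψ (Icc a b))
    (hd : ∀ r ∈ Ioo a b, ψ r < 0 → 0 < deriv ψ r)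
    (h0 : 0 ≤ ψ a) : 0 ≤ ψ b := by
  by_contra hb
  push_neg at hb
  have hab' : a < b := by
    rcases eq_or_lt_of_le hab with h | h
    · subst h; linarith
    · exact h
  set K : Set ℝ := Icc a b ∩ ψ ⁻¹' (Ici 0) with hK
  have hKcl : IsClosed K := hc.preimage_isClosed_of_isClosed isClosed_Icc isClosed_Ici
  have hKcpt : IsCompact K := isCompact_Icc.of_isClosed_subset hKcl inter_subset_left
  have haK : a ∈ K := ⟨⟨le_refl a, hab⟩, h0⟩
  have hcK : sSup K ∈ K := hKcpt.sSup_mem ⟨a, haK⟩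
  set c := sSup K with hc'
  have hca : a ≤ c := hcK.1.1
  have hcb : c ≤ b := hcK.1.2
  have hψc : 0 ≤ ψ c := hcK.2
  have hcb' : c < b := lt_of_le_of_ne hcb (fun h => by rw [h] at hψc; linarith)
  have hneg : ∀ r ∈ Ioc c b, ψ r < 0 := by
    intro r hr
    by_contra hge
    push_neg at hge
    have : r ∈ K := ⟨⟨le_trans hca hr.1.le, hr.2⟩, hge⟩
    have := le_csSup hKcpt.bddAbove this
    exact absurd this (not_le.mpr hr.1)
  have hmono : StrictMonoOn ψ (Icc c b) := by
    apply strictMonoOn_of_deriv_pos (convex_Icc c b)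
      (hc.mono (Icc_subset_Icc_left hca))
    intro x hx
    rw [interior_Icc] at hx
    exact hd x ⟨lt_of_le_of_lt hca hx.1, hx.2⟩ (hneg x ⟨hx.1, hx.2.le⟩)
  have := hmono ⟨le_refl c, hcb'.le⟩ ⟨hcb'.le, le_refl b⟩ hcb'
  linarith


set_option maxHeartbeats 2000000 in
/-- Part (4) of Proposition 4.2: the bowl soliton profile `f`, solving
`f'' = (1 + f'²)(1 - (n-1) f' / r)` on `(0,∞)` with `f(0) = 0` and `f'(0⁺) = 0`,
satisfies: for every `ε > 0` there is a constant `M = M(ε) > 0` with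
`f(r) > (1-ε) r²/(2(n-1)) - M` for all `r ≥ 0`. -/
theorem bowl_profile_quadratic_lower_bound (n : ℕ) (hn : 2 ≤ n) (f : ℝ → ℝ)
    (hf0 : f 0 = 0)
    (hcont : ContinuousOn f (Set.Ici 0))
    (hC2 : ContDiffOn ℝ 2 f (Set.Ioi 0))
    (hd0 : Tendsto (deriv f) (nhdsWithin 0 (Set.Ioi 0)) (nhds 0))
    (hODE : ∀ r : ℝ, 0 < r → deriv (deriv f) r =
      (1 + (deriv f r) ^ 2) * (1 - ((n : ℝ) - 1) * deriv f r / r)) :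
    ∀ ε : ℝ, 0 < ε → ∃ M : ℝ, 0 < M ∧
      ∀ r : ℝ, 0 ≤ r → (1 - ε) * r ^ 2 / (2 * ((n : ℝ) - 1)) - M < f r := by
  set N : ℝ := (n : ℝ) - 1 with hNdef
  have hN : (1 : ℝ) ≤ N := by
    have : (2 : ℝ) ≤ (n : ℝ) := by exact_mod_cast hn
    simp only [hNdef]; linarith
  have hNpos : (0 : ℝ) < N := by linarith
  set g : ℝ → ℝ := deriv f with hgdef
  -- differentiability facts
  have hdiff : DifferentiableOn ℝ f (Ioi 0) := hC2.differentiableOn two_ne_zero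
  have hgC1 : ContDiffOn ℝ 1 g (Ioi 0) := by
    apply hC2.deriv_of_isOpen isOpen_Ioi
    norm_num
  have hg_diffOn : DifferentiableOn ℝ g (Ioi 0) := hgC1.differentiableOn one_ne_zero
  have hg_diff : ∀ r : ℝ, 0 < r → DifferentiableAt ℝ g r := fun r hr =>
    hg_diffOn.differentiableAt (Ioi_mem_nhds hr)
  have hf_diff : ∀ r : ℝ, 0 < r → DifferentiableAt ℝ f r := fun r hr =>
    hdiff.differentiableAt (Ioi_mem_nhds hr)
  have hgc : ContinuousOn g (Ioi 0) := hg_diffOn.continuousOn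
  have hgd : ∀ r : ℝ, 0 < r →
      HasDerivAt g ((1 + g r ^ 2) * (1 - N * g r / r)) r := by
    intro r hr
    have h := (hg_diff r hr).hasDerivAt
    rwa [hODE r hr] at h
  -- L2 : N * g r ≤ r for all r > 0
  have hL2 : ∀ r : ℝ, 0 < r → N * g r ≤ r := by
    intro r₀ hr₀
    set ψ : ℝ → ℝ := fun s => if s = 0 then 0 else s - N * g s with hψdef
    have hψpos : ∀ s : ℝ, 0 < s → ψ s = s - N * g s := by
      intro s hs; simp [hψdef, ne_of_gt hs]
    have hψeq : ∀ s : ℝ, 0 < s → ψ =ᶠ[nhds s] fun t => t - N * g t := by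
      intro s hs
      filter_upwards [Ioi_mem_nhds hs] with t ht
      exact hψpos t ht
    have hψ0 : ψ 0 = 0 := by simp [hψdef]
    have hψcont : ContinuousOn ψ (Icc 0 r₀) := by
      intro s hs
      rcases eq_or_lt_of_le hs.1 with h0 | h0
      · -- continuity at 0
        rw [← h0]
        have hicc : Icc (0:ℝ) r₀ = insert 0 (Ioc 0 r₀) := (Ioc_insert_left hr₀.le).symm
        rw [ContinuousWithinAt, hicc, nhdsWithin_insert, hψ0, tendsto_sup]
        constructor
        · simpa [hψ0] using tendsto_pure_nhds ψ 0
        · have h1 : Tendsto (fun t : ℝ => t - N * g t) (nhdsWithin 0 (Ioi 0)) (nhds 0) := by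
            have := ((tendsto_nhdsWithin_of_tendsto_nhds (continuous_id.tendsto 0)).sub
              (hd0.const_mul N))
            simpa using this
          have h2 : Tendsto ψ (nhdsWithin 0 (Ioi 0)) (nhds 0) := by
            apply h1.congr'
            filter_upwards [self_mem_nhdsWithin] with t ht
            exact (hψpos t ht).symm
          exact h2.mono_left (nhdsWithin_mono 0 Ioc_subset_Ioi_self)
      · -- continuity at s > 0
        apply ContinuousAt.continuousWithinAt
        have hca : ContinuousAt (fun t : ℝ => t - N * g t) s :=
          (continuousAt_id.sub ((hg_diff s h0).continuousAt.const_mul N))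
        exact hca.congr (hψeq s h0).symm
    have h0 : 0 ≤ ψ 0 := by rw [hψ0]
    have hdpos : ∀ x ∈ Ioo (0:ℝ) r₀, ψ x < 0 → 0 < deriv ψ x := by
      intro x hx hneg
      have hx0 : 0 < x := hx.1
      have hder : HasDerivAt (fun t : ℝ => t - N * g t)
          (1 - N * ((1 + g x ^ 2) * (1 - N * g x / x))) x :=
        (hasDerivAt_id x).sub ((hgd x hx0).const_mul N)
      have hde : deriv ψ x = 1 - N * ((1 + g x ^ 2) * (1 - N * g x / x)) := by
        rw [(hψeq x hx0).deriv_eq, hder.deriv]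
      rw [hde]
      have hψx : ψ x = x - N * g x := hψpos x hx0
      rw [hψx] at hneg
      have hfrac : 1 - N * g x / x = (x - N * g x) / x := by field_simp
      have hfneg : 1 - N * g x / x < 0 := by
        rw [hfrac]; exact div_neg_of_neg_of_pos hneg hx0
      have hsq : (0:ℝ) < 1 + g x ^ 2 := by positivity
      nlinarith [mul_nonneg (mul_nonneg hNpos.le hsq.le) (neg_nonneg.mpr hfneg.le)]
    have hfin := no_escape hr₀.le hψcont hdpos h0
    rw [hψpos r₀ hr₀] at hfin
    linarith
  -- g is nondecreasing on (0,∞)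
  have hg'0 : ∀ x ∈ interior (Ioi (0:ℝ)), 0 ≤ deriv g x := by
    rw [interior_Ioi]
    intro x hx
    rw [hODE x hx]
    have h3 : N * g x / x ≤ 1 := by
      rw [div_le_one hx]; exact hL2 x hx
    have h2 : (0:ℝ) < 1 + g x ^ 2 := by positivity
    nlinarith
  have hgmono : MonotoneOn g (Ioi 0) := by
    apply monotoneOn_of_deriv_nonneg (convex_Ioi 0) hgc
    · rw [interior_Ioi]; exact hg_diffOn
    · exact hg'0
  -- g ≥ 0 on (0,∞)
  have hg0 : ∀ r : ℝ, 0 < r → 0 ≤ g r := by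
    intro r hr
    have hev : ∀ᶠ s in nhdsWithin (0:ℝ) (Ioi 0), g s ≤ g r := by
      have h1 : Iio r ∈ nhdsWithin (0:ℝ) (Ioi 0) :=
        mem_nhdsWithin_of_mem_nhds (Iio_mem_nhds hr)
      filter_upwards [self_mem_nhdsWithin, h1] with s hs hs'
      exact hgmono hs hr (le_of_lt hs')
    exact le_of_tendsto hd0 hev
  -- f nondecreasing and nonneg on [0,∞)
  have hfmono : MonotoneOn f (Ici 0) := by
    apply monotoneOn_of_deriv_nonneg (convex_Ici 0) hcont
    · rw [interior_Ici]; exact hdiff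
    · rw [interior_Ici]; exact fun x hx => hg0 x hx
  have hfnn : ∀ r : ℝ, 0 ≤ r → 0 ≤ f r := by
    intro r hr
    have := hfmono (self_mem_Ici) hr hr
    rwa [hf0] at this
  -- main argument
  intro ε hε
  rcases le_or_gt 1 ε with hε1 | hε1
  · -- trivial case ε ≥ 1
    refine ⟨1, one_pos, fun r hr => ?_⟩
    have h1 : (1 - ε) * r ^ 2 ≤ 0 := mul_nonpos_of_nonpos_of_nonneg (by linarith) (sq_nonneg r)
    have h2 : (1 - ε) * r ^ 2 / (2 * N) ≤ 0 := div_nonpos_of_nonpos_of_nonneg h1 (by linarith)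
    have := hfnn r hr
    linarith
  · -- main case 0 < ε < 1
    set R₀ : ℝ := 1 + N / (ε * (1 - ε) ^ 2) with hR₀def
    have hεq : (0:ℝ) < ε * (1 - ε) ^ 2 := mul_pos hε (pow_pos (by linarith) 2)
    have hR₀1 : 1 ≤ R₀ := by
      have : 0 ≤ N / (ε * (1 - ε) ^ 2) := by positivity
      simp only [hR₀def]; linarith
    have hR₀pos : (0:ℝ) < R₀ := by linarith
    have hR₀key : N < ε * (1 - ε) ^ 2 * R₀ ^ 2 := by
      have h2 : ε * (1 - ε) ^ 2 * R₀ = ε * (1 - ε) ^ 2 + N := by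
        simp only [hR₀def]; field_simp
      have h3 : N < ε * (1 - ε) ^ 2 * R₀ := by rw [h2]; nlinarith
      nlinarith [mul_le_mul_of_nonneg_left
        (by nlinarith : R₀ ≤ R₀ ^ 2) hεq.le]
    -- L5 : existence of a point r₂ ≥ R₀ where N * g r₂ ≥ (1-ε) r₂
    obtain ⟨r₂, hr₂mem, hr₂⟩ :
        ∃ r₂ ∈ Icc R₀ (R₀ + 2 / ε), (1 - ε) * r₂ ≤ N * g r₂ := by
      by_contra hcon
      push_neg at hcon
      set b : ℝ := R₀ + 2 / ε with hbdef
      have hRb : R₀ < b := by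
        have h2ε : (0:ℝ) < 2 / ε := by positivity
        simp only [hbdef]; linarith
      set h : ℝ → ℝ := fun s => arctan (g s) - ε * s with hhdef
      have hsub : Icc R₀ b ⊆ Ioi (0:ℝ) := fun x hx => lt_of_lt_of_le hR₀pos hx.1
      have hhc : ContinuousOn h (Icc R₀ b) := by
        apply ContinuousOn.sub
        · exact Real.continuous_arctan.comp_continuousOn (hgc.mono hsub)
        · exact (continuous_const.mul continuous_id).continuousOn
      have hmono : StrictMonoOn h (Icc R₀ b) := by
        apply strictMonoOn_of_deriv_pos (convex_Icc R₀ b) hhc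
        intro x hx
        rw [interior_Icc] at hx
        have hx0 : 0 < x := lt_trans hR₀pos hx.1
        have hda : HasDerivAt (fun s => arctan (g s))
            (1 / (1 + g x ^ 2) * ((1 + g x ^ 2) * (1 - N * g x / x))) x :=
          (hgd x hx0).arctan
        have hsq : (1 + g x ^ 2) ≠ 0 := by positivity
        have hid : HasDerivAt (fun s : ℝ => ε * s) ε x := by
          simpa using (hasDerivAt_id x).const_mul ε
        have hda' : HasDerivAt h (1 / (1 + g x ^ 2) * ((1 + g x ^ 2) * (1 - N * g x / x)) - ε) x :=
          hda.sub hid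
        rw [hda'.deriv]
        have heq : 1 / (1 + g x ^ 2) * ((1 + g x ^ 2) * (1 - N * g x / x)) =
            1 - N * g x / x := by field_simp
        rw [heq]
        have hlt := hcon x ⟨hx.1.le, hx.2.le⟩
        have hd2 : N * g x / x < 1 - ε := by
          rw [div_lt_iff₀ hx0]; nlinarith
        linarith
      have hineq := hmono ⟨le_refl R₀, hRb.le⟩ ⟨hRb.le, le_refl b⟩ hRb
      simp only [hhdef] at hineq
      have hεb : ε * b = ε * R₀ + 2 := by
        simp only [hbdef]; field_simp
      have ha1 : 0 ≤ arctan (g R₀) := by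
        rw [← Real.arctan_zero]
        exact Real.arctan_strictMono.monotone (hg0 R₀ hR₀pos)
      have ha2 : arctan (g b) < π / 2 := Real.arctan_lt_pi_div_two _
      have hpi : π ≤ 4 := Real.pi_le_four
      linarith
    have hr₂R : R₀ ≤ r₂ := hr₂mem.1
    have hr₂pos : 0 < r₂ := lt_of_lt_of_le hR₀pos hr₂R
    -- L6 : stays above the line for r ≥ r₂
    have hL6 : ∀ r : ℝ, r₂ ≤ r → (1 - ε) * r ≤ N * g r := by
      intro r₀ hr₀
      set ψ : ℝ → ℝ := fun s => N * g s - (1 - ε) * s with hψdef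
      have hsub : Icc r₂ r₀ ⊆ Ioi (0:ℝ) := fun x hx => lt_of_lt_of_le hr₂pos hx.1
      have hψc : ContinuousOn ψ (Icc r₂ r₀) := by
        apply ContinuousOn.sub
        · exact (hgc.mono hsub).const_smul N
        · exact (continuous_const.mul continuous_id).continuousOn
      have h0 : 0 ≤ ψ r₂ := by simp only [hψdef]; linarith
      have hdpos : ∀ x ∈ Ioo r₂ r₀, ψ x < 0 → 0 < deriv ψ x := by
        intro x hx hneg
        have hx0 : 0 < x := lt_trans hr₂pos hx.1
        have hid : HasDerivAt (fun s : ℝ => (1 - ε) * s) (1 - ε) x := by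
          simpa using (hasDerivAt_id x).const_mul (1 - ε)
        have hda : HasDerivAt ψ
            (N * ((1 + g x ^ 2) * (1 - N * g x / x)) - (1 - ε)) x :=
          ((hgd x hx0).const_mul N).sub hid
        rw [hda.deriv]
        simp only [hψdef] at hneg
        have hgx : (1 - ε) * R₀ ≤ N * g x := by
          have h1 : g r₂ ≤ g x := hgmono hr₂pos hx0 hx.1.le
          have h2 : (1 - ε) * R₀ ≤ (1 - ε) * r₂ :=
            mul_le_mul_of_nonneg_left hr₂R (by linarith)
          nlinarith
        have hfac : ε < 1 - N * g x / x := by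
          have hd3 : N * g x / x < 1 - ε := by rw [div_lt_iff₀ hx0]; nlinarith
          linarith
        have hgxpos : 0 ≤ g x := hg0 x hx0
        have hsq : (1 - ε) ^ 2 * R₀ ^ 2 ≤ N ^ 2 * g x ^ 2 := by
          have hnn : 0 ≤ (1 - ε) * R₀ := mul_nonneg (by linarith) hR₀pos.le
          have hmm := mul_le_mul hgx hgx hnn (mul_nonneg hNpos.le hgxpos)
          nlinarith [hmm]
        -- N (1+g²)(1 - Ng/x) - (1-ε) ≥ N ε (1 + g²) - 1 > 0
        have hkey : ε * (1 - ε) ^ 2 * R₀ ^ 2 / N ≤ ε * N * g x ^ 2 := by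
          rw [div_le_iff₀ hNpos]; nlinarith
        have hstep : N * (1 + g x ^ 2) * ε ≤ N * (1 + g x ^ 2) * (1 - N * g x / x) := by
          apply mul_le_mul_of_nonneg_left hfac.le
          positivity
        have hbig : 1 < N * (1 + g x ^ 2) * ε := by
          have h5 : ε * (1 - ε) ^ 2 * R₀ ^ 2 / N ≥ 1 := by
            rw [ge_iff_le, le_div_iff₀ hNpos]; nlinarith
          nlinarith
        nlinarith
      have hfin := no_escape hr₀ hψc hdpos h0
      simp only [hψdef] at hfin
      linarith
    -- L7 : F monotone on [r₂, ∞)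
    set F : ℝ → ℝ := fun r => f r - (1 - ε) / (2 * N) * r ^ 2 with hFdef
    have hFmono : MonotoneOn F (Ici r₂) := by
      apply monotoneOn_of_deriv_nonneg (convex_Ici r₂)
      · apply ContinuousOn.sub
        · exact hcont.mono (fun x hx => le_trans hr₂pos.le hx)
        · exact (continuous_const.mul (continuous_pow 2)).continuousOn
      · rw [interior_Ici]
        intro x hx
        exact ((hf_diff x (lt_trans hr₂pos hx)).sub
          ((differentiableAt_pow 2).const_mul _)).differentiableWithinAt
      · rw [interior_Ici]
        intro x hx
        have hx0 : 0 < x := lt_trans hr₂pos hx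
        have hda : HasDerivAt F (g x - (1 - ε) / (2 * N) * (2 * x)) x := by
          have h1 : HasDerivAt (fun r : ℝ => (1 - ε) / (2 * N) * r ^ 2)
              ((1 - ε) / (2 * N) * (2 * x)) x := by
            have := (hasDerivAt_pow 2 x).const_mul ((1 - ε) / (2 * N))
            simpa [mul_comm] using this
          exact ((hf_diff x hx0).hasDerivAt).sub h1
        rw [hda.deriv]
        have h6 := hL6 x (le_of_lt hx)
        have h2 : (1 - ε) / (2 * N) * (2 * x) = (1 - ε) * x / N := by
          field_simp
        rw [h2, sub_nonneg, div_le_iff₀ hNpos]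
        nlinarith
    have hMpos : 0 < (1 - ε) * r₂ ^ 2 / (2 * N) + 1 := by
      have h9 : 0 ≤ (1 - ε) * r₂ ^ 2 := mul_nonneg (by linarith) (sq_nonneg _)
      have h10 : 0 ≤ (1 - ε) * r₂ ^ 2 / (2 * N) := div_nonneg h9 (by linarith)
      linarith
    refine ⟨(1 - ε) * r₂ ^ 2 / (2 * N) + 1, hMpos, fun r hr => ?_⟩
    rcases le_or_gt r r₂ with hcase | hcase
    · have h1 : (1 - ε) * r ^ 2 ≤ (1 - ε) * r₂ ^ 2 := by
        have hrr := mul_le_mul hcase hcase hr hr₂pos.le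
        nlinarith [hrr]
      have h2N : (0:ℝ) < 2 * N := by linarith
      have h2 : (1 - ε) * r ^ 2 / (2 * N) ≤ (1 - ε) * r₂ ^ 2 / (2 * N) :=
        (div_le_div_iff_of_pos_right h2N).mpr h1
      have := hfnn r hr
      linarith
    · have hm := hFmono (self_mem_Ici) (le_of_lt hcase) (le_of_lt hcase)
      simp only [hFdef] at hm
      have hf2 := hfnn r₂ hr₂pos.le
      have heq : (1 - ε) / (2 * N) * r ^ 2 = (1 - ε) * r ^ 2 / (2 * N) := by ring
      have heq2 : (1 - ε) / (2 * N) * r₂ ^ 2 = (1 - ε) * r₂ ^ 2 / (2 * N) := by ring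
      linarith
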